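/- Let n ≥ 6 with gcd(n, n−3) = 1. For j = 2, 3, 4, let 𝒬_j be a primitive nonpowerful signed digraph whose underlying digraph is 𝓑_j and in which all cycles of length n−3 have the same sign. Then l_{𝒬_j}(k) = l_{𝒬_j}(v_k) = 2n²−8n+3+k for every 1 ≤ k ≤ n and every j ∈ {2,3,4}. -/

import Mathlib

/-- `f : ℕ → V` traces a directed walk of length `t` in the digraph with
adjacency relation `A` if consecutive vertices are joined by arcs. -/
def IsWalk {V : Type*} (A : V → V → Prop) (t : ℕ) (f : ℕ → V) : Prop :=
  ∀ i < t, A (f i) (f (i + 1))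

/-- There is a directed walk of length `t` from `u` to `v`. -/
def HasWalk {V : Type*} (A : V → V → Prop) (t : ℕ) (u v : V) : Prop :=
  ∃ f : ℕ → V, f 0 = u ∧ f t = v ∧ IsWalk A t f

/-- A digraph is strongly connected if every vertex can reach every vertex. -/
def StronglyConnected {V : Type*} (A : V → V → Prop) : Prop :=
  ∀ u v : V, ∃ t : ℕ, HasWalk A t u v

/-- A digraph is primitive if it is strongly connected and for some `t > 0`
there are directed walks of length `t` between every ordered pair of vertices. -/
def IsPrimitive {V : Type*} (A : V → V → Prop) : Prop :=
  StronglyConnected A ∧ ∃ t : ℕ, 0 < t ∧ ∀ u v : V, HasWalk A t u v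

/-- The local exponent at `u`: the least `l` such that for every `t ≥ l` and
every vertex `v` there is a directed walk of length `t` from `u` to `v`. -/
noncomputable def localExp {V : Type*} (A : V → V → Prop) (u : V) : ℕ :=
  sInf {l : ℕ | ∀ t ≥ l, ∀ v : V, HasWalk A t u v}

/-- `kthSmallest f k` is the `k`-th smallest element (1-indexed) of the
multiset of values of `f`. -/
noncomputable def kthSmallest {n : ℕ} (f : Fin n → ℕ) (k : ℕ) : ℕ :=
  (Multiset.sort (Finset.univ.val.map f) (· ≤ ·)).getD (k - 1) 0

/-- A directed cycle of length `c` (a closed walk whose first `c` vertices are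
pairwise distinct), given by its vertex function. -/
def IsCycle {V : Type*} (A : V → V → Prop) (c : ℕ) (f : ℕ → V) : Prop :=
  IsWalk A c f ∧ f c = f 0 ∧ ∀ i < c, ∀ j < c, f i = f j → i = j

/-- A signed digraph: each arc carries a sign `+1` or `-1`. -/
structure SignedDigraph (V : Type*) where
  Adj : V → V → Prop
  sgn : V → V → ℤ
  sgn_unit : ∀ u v : V, Adj u v → sgn u v = 1 ∨ sgn u v = -1

namespace SignedDigraph

variable {V : Type*} (S : SignedDigraph V)

/-- The sign of the walk of length `t` traced by `f`. -/
def walkSign (t : ℕ) (f : ℕ → V) : ℤ :=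
  ∏ i ∈ Finset.range t, S.sgn (f i) (f (i + 1))

/-- There is a pair of SSSD walks of length `t` from `u` to `v`: two walks with
the same endpoints and the same length but different signs. -/
def HasSSSD (t : ℕ) (u v : V) : Prop :=
  ∃ f g : ℕ → V,
    (f 0 = u ∧ f t = v ∧ IsWalk S.Adj t f) ∧
    (g 0 = u ∧ g t = v ∧ IsWalk S.Adj t g) ∧
    S.walkSign t f ≠ S.walkSign t g

/-- A signed digraph is primitive and nonpowerful if from some length on there
are SSSD walk pairs between all ordered pairs of vertices. -/
def IsPrimitiveNonpowerful : Prop :=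
  ∃ l : ℕ, 0 < l ∧ ∀ t ≥ l, ∀ u v : V, S.HasSSSD t u v

/-- The local base at vertex `u`: the least `l` such that for every `t ≥ l` and
every vertex `v` there is a pair of SSSD walks of length `t` from `u` to `v`. -/
noncomputable def localBase (u : V) : ℕ :=
  sInf {l : ℕ | ∀ t ≥ l, ∀ v : V, S.HasSSSD t u v}

/-- All directed cycles of length `c` in `S` have the same sign. -/
def SameSignCycles (c : ℕ) : Prop :=
  ∀ f g : ℕ → V, IsCycle S.Adj c f → IsCycle S.Adj c g →
    S.walkSign c f = S.walkSign c g

end SignedDigraph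

/-- Isomorphism of digraphs. -/
def DigraphIso {V W : Type*} (A : V → V → Prop) (B : W → W → Prop) : Prop :=
  ∃ e : V ≃ W, ∀ u v : V, A u v ↔ B (e u) (e v)

/-- The Hamilton cycle `Cₙ` on `v₁,…,vₙ` (here `vⱼ` is the vertex with 0-based
index `j-1`), with arcs `v₁ → vₙ` and `vⱼ → v_{j-1}` for `2 ≤ j ≤ n`. -/
def CnAdj (n : ℕ) : Fin n → Fin n → Prop := fun a b =>
  (a.val = 0 ∧ b.val = n - 1) ∨ a.val = b.val + 1

/-- The digraph `D_{k,i}`: the Hamilton cycle `Cₙ` together with the arcs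
`vⱼ → v_{n-k+j-1}` for `1 ≤ j ≤ i`. -/
def DkiAdj (n k i : ℕ) : Fin n → Fin n → Prop := fun a b =>
  CnAdj n a b ∨ ∃ j : ℕ, 1 ≤ j ∧ j ≤ i ∧ a.val = j - 1 ∧ b.val = n - k + j - 2

/-- The digraph `𝓛`: `Cₙ` together with the arcs `v₁ → v_{n-2}` and `v₃ → vₙ`. -/
def LAdj (n : ℕ) : Fin n → Fin n → Prop := fun a b =>
  CnAdj n a b ∨ (a.val = 0 ∧ b.val = n - 3) ∨ (a.val = 2 ∧ b.val = n - 1)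

/-- The digraph `F`: the `(n-1)`-cycle `v₁ → vₙ → v_{n-1} → v_{n-3} → ⋯ → v₂ → v₁`
together with the arcs `v₁ → v_{n-2}` and `v_{n-2} → v_{n-3}`. -/
def FAdj (n : ℕ) : Fin n → Fin n → Prop := fun a b =>
  (a.val = 0 ∧ b.val = n - 1) ∨ (a.val = n - 1 ∧ b.val = n - 2) ∨
  (a.val = n - 2 ∧ b.val = n - 4) ∨ (a.val = b.val + 1 ∧ 1 ≤ a.val ∧ a.val ≤ n - 4) ∨
  (a.val = 0 ∧ b.val = n - 3) ∨ (a.val = n - 3 ∧ b.val = n - 4)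

/-- The digraph `F₁`: the `(n-1)`-cycle `v₁ → v_{n-1} → v_{n-2} → ⋯ → v₂ → v₁`
together with the arcs `v₁ → v_{n-2}`, `v₂ → vₙ` and `vₙ → v_{n-1}`. -/
def F1Adj (n : ℕ) : Fin n → Fin n → Prop := fun a b =>
  (a.val = 0 ∧ b.val = n - 2) ∨ (a.val = b.val + 1 ∧ 1 ≤ a.val ∧ a.val ≤ n - 2) ∨
  (a.val = 0 ∧ b.val = n - 3) ∨ (a.val = 1 ∧ b.val = n - 1) ∨ (a.val = n - 1 ∧ b.val = n - 2)

/-- The digraph `F₂`: the `(n-1)`-cycle `v₁ → vₙ → v_{n-2} → v_{n-3} → ⋯ → v₂ → v₁`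
together with the arcs `v₁ → v_{n-2}`, `vₙ → v_{n-1}` and `v_{n-1} → v_{n-3}`. -/
def F2Adj (n : ℕ) : Fin n → Fin n → Prop := fun a b =>
  (a.val = 0 ∧ b.val = n - 1) ∨ (a.val = n - 1 ∧ b.val = n - 3) ∨
  (a.val = b.val + 1 ∧ 1 ≤ a.val ∧ a.val ≤ n - 3) ∨
  (a.val = 0 ∧ b.val = n - 3) ∨ (a.val = n - 1 ∧ b.val = n - 2) ∨ (a.val = n - 2 ∧ b.val = n - 4)

/-- The digraph `F₃`: the `(n-2)`-cycle `v₁ → v_{n-2} → v_{n-3} → ⋯ → v₂ → v₁`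
together with the arcs `v₁ → v_{n-1}`, `v_{n-1} → v_{n-2}`, `v₁ → vₙ` and `vₙ → v_{n-2}`. -/
def F3Adj (n : ℕ) : Fin n → Fin n → Prop := fun a b =>
  (a.val = 0 ∧ b.val = n - 3) ∨ (a.val = b.val + 1 ∧ 1 ≤ a.val ∧ a.val ≤ n - 3) ∨
  (a.val = 0 ∧ b.val = n - 2) ∨ (a.val = n - 2 ∧ b.val = n - 3) ∨
  (a.val = 0 ∧ b.val = n - 1) ∨ (a.val = n - 1 ∧ b.val = n - 3)

/-- The digraph `F₇`: the `(n-1)`-cycle `v₁ → v_{n-1} → v_{n-2} → ⋯ → v₂ → v₁`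
together with the arcs `v₁ → v_{n-2}`, `v₃ → vₙ` and `vₙ → v_{n-1}`. -/
def F7Adj (n : ℕ) : Fin n → Fin n → Prop := fun a b =>
  (a.val = 0 ∧ b.val = n - 2) ∨ (a.val = b.val + 1 ∧ 1 ≤ a.val ∧ a.val ≤ n - 2) ∨
  (a.val = 0 ∧ b.val = n - 3) ∨ (a.val = 2 ∧ b.val = n - 1) ∨ (a.val = n - 1 ∧ b.val = n - 2)

/-- The digraph `F'ᵢ` (for `2 ≤ i ≤ n-3`): the `(n-1)`-cycle
`v₁ → v_{n-1} → v_{n-2} → ⋯ → v₂ → v₁` together with the arcs `v₁ → v_{n-2}`,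
`v_{i+1} → vₙ` and `vₙ → v_{i-1}`. -/
def FpAdj (n i : ℕ) : Fin n → Fin n → Prop := fun a b =>
  (a.val = 0 ∧ b.val = n - 2) ∨ (a.val = b.val + 1 ∧ 1 ≤ a.val ∧ a.val ≤ n - 2) ∨
  (a.val = 0 ∧ b.val = n - 3) ∨ (a.val = i ∧ b.val = n - 1) ∨ (a.val = n - 1 ∧ b.val = i - 2)

/-- The digraph `𝓑₁`: `Cₙ` together with the arcs `v₁ → v_{n-3}` and `v₃ → v_{n-1}`. -/
def B1Adj (n : ℕ) : Fin n → Fin n → Prop := fun a b =>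
  CnAdj n a b ∨ (a.val = 0 ∧ b.val = n - 4) ∨ (a.val = 2 ∧ b.val = n - 2)

/-- The digraph `𝓑₂`: `Cₙ` together with the arcs `v₁ → v_{n-3}` and `v₄ → vₙ`. -/
def B2Adj (n : ℕ) : Fin n → Fin n → Prop := fun a b =>
  CnAdj n a b ∨ (a.val = 0 ∧ b.val = n - 4) ∨ (a.val = 3 ∧ b.val = n - 1)

/-- The digraph `𝓑₃`: `Cₙ` together with the arcs `v₁ → v_{n-3}`, `v₂ → v_{n-2}`
and `v₄ → vₙ`. -/
def B3Adj (n : ℕ) : Fin n → Fin n → Prop := fun a b =>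
  CnAdj n a b ∨ (a.val = 0 ∧ b.val = n - 4) ∨ (a.val = 1 ∧ b.val = n - 3) ∨
  (a.val = 3 ∧ b.val = n - 1)

/-- The digraph `𝓑₄`: `Cₙ` together with the arcs `v₁ → v_{n-3}`, `v₃ → v_{n-1}`
and `v₄ → vₙ`. -/
def B4Adj (n : ℕ) : Fin n → Fin n → Prop := fun a b =>
  CnAdj n a b ∨ (a.val = 0 ∧ b.val = n - 4) ∨ (a.val = 2 ∧ b.val = n - 2) ∨
  (a.val = 3 ∧ b.val = n - 1)

/-! ### Auxiliary development for stmt10 -/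

namespace Stmt10

/-- predecessor on the cycle: `a ↦ a - 1 (mod n)` -/
def pr {n : ℕ} (a : Fin n) : Fin n :=
  if h : a.val = 0 then ⟨n-1, by have := a.isLt; omega⟩ else ⟨a.val - 1, by have := a.isLt; omega⟩

/-- `m`-step descent from `u` -/
def dsc {n : ℕ} (u : Fin n) (m : ℕ) : Fin n := pr^[m] u

/-- cyclic distance `u - v (mod n)` -/
def dist {n : ℕ} (u v : Fin n) : ℕ :=
  if v.val ≤ u.val then u.val - v.val else u.val + n - v.val

lemma pr_val {n : ℕ} (a : Fin n) :
    (pr a).val = if a.val = 0 then n - 1 else a.val - 1 := by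
  unfold pr; split <;> simp_all

lemma dsc_zero {n : ℕ} (u : Fin n) : dsc u 0 = u := rfl

lemma dsc_succ {n : ℕ} (u : Fin n) (m : ℕ) : dsc u (m+1) = pr (dsc u m) :=
  Function.iterate_succ_apply' pr m u

lemma dsc_one {n : ℕ} (u : Fin n) : dsc u 1 = pr u := rfl

lemma dsc_add {n : ℕ} (u : Fin n) (a b : ℕ) : dsc u (a + b) = dsc (dsc u a) b := by
  unfold dsc; rw [Nat.add_comm, Function.iterate_add_apply]

lemma dsc_val_le {n : ℕ} (u : Fin n) (m : ℕ) (hm : m ≤ n) :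
    (dsc u m).val = if m ≤ u.val then u.val - m else u.val + n - m := by
  induction m with
  | zero => simp [dsc_zero]
  | succ m ih =>
      have hu := u.isLt
      have hd := (dsc u m).isLt
      rw [dsc_succ, pr_val, ih (by omega)]
      split <;> split <;> split <;> omega

lemma dsc_n {n : ℕ} (u : Fin n) : dsc u n = u := by
  have hu := u.isLt
  apply Fin.ext
  rw [dsc_val_le u n (le_refl n)]
  split <;> omega

lemma dsc_add_n {n : ℕ} (u : Fin n) (a : ℕ) : dsc u (a + n) = dsc u a := by
  rw [Nat.add_comm, dsc_add, dsc_n]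

lemma dist_lt {n : ℕ} (u v : Fin n) : dist u v < n := by
  have := u.isLt; have := v.isLt; unfold dist; split <;> omega

lemma dist_self {n : ℕ} (u : Fin n) : dist u u = 0 := by unfold dist; simp

lemma dsc_dist {n : ℕ} (u v : Fin n) : dsc u (dist u v) = v := by
  have hu := u.isLt; have hv := v.isLt
  apply Fin.ext
  rw [dsc_val_le u _ (le_of_lt (dist_lt u v))]
  unfold dist; split <;> split <;> omega

lemma dist_dsc {n : ℕ} (u w : Fin n) (m : ℕ) (hm : m ≤ n) :
    dist u (dsc w m) = if dist u w + m < n then dist u w + m else dist u w + m - n := by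
  have hu := u.isLt; have hw := w.isLt
  have hv := dsc_val_le w m hm
  unfold dist at *
  split at hv <;> rw [hv] <;> split <;> split <;> split <;> omega

lemma dist_dsc_self {n : ℕ} (u : Fin n) (m : ℕ) (hm : m < n) : dist u (dsc u m) = m := by
  rw [dist_dsc u u m (le_of_lt hm), dist_self]
  simp [hm]

lemma dsc_inj {n : ℕ} (u : Fin n) (i j : ℕ) (hi : i < n) (hj : j < n)
    (h : dsc u i = dsc u j) : i = j := by
  have h1 := dist_dsc_self u i hi
  have h2 := dist_dsc_self u j hj
  rw [h] at h1; omega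

end Stmt10

namespace Stmt10

section Signs

variable {n : ℕ} [NeZero n]

/-- vertex `0` -/
def v0 {n : ℕ} [NeZero n] : Fin n := ⟨0, Nat.pos_of_ne_zero (NeZero.ne n)⟩

/-- sign of the cycle arc leaving `a` -/
def cyS (S : SignedDigraph (Fin n)) (a : Fin n) : ℤ := S.sgn a (pr a)

/-- sign of the Hamilton cycle -/
def rho (S : SignedDigraph (Fin n)) : ℤ := ∏ a : Fin n, cyS S a

/-- sign of the `m`-step descent from `u` -/
def EdS (S : SignedDigraph (Fin n)) (u : Fin n) (m : ℕ) : ℤ :=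
  ∏ i ∈ Finset.range m, cyS S (dsc u i)

/-- sign of the `(n-3)`-cycle through the chord at `0` -/
def sg (S : SignedDigraph (Fin n)) : ℤ :=
  S.sgn v0 (dsc v0 4) * EdS S (dsc v0 4) (n-4)

/-- number of chord steps of `f` among the first `t` steps -/
def cc (f : ℕ → Fin n) (t : ℕ) : ℕ :=
  ((Finset.range t).filter (fun i => (f i).val + n = (f (i+1)).val + 4)).card

variable (S : SignedDigraph (Fin n))

lemma EdS_zero (u : Fin n) : EdS S u 0 = 1 := by simp [EdS]

lemma EdS_succ (u : Fin n) (m : ℕ) :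
    EdS S u (m+1) = EdS S u m * cyS S (dsc u m) := Finset.prod_range_succ _ _

lemma EdS_add (u : Fin n) (a b : ℕ) :
    EdS S u (a + b) = EdS S u a * EdS S (dsc u a) b := by
  unfold EdS
  rw [Finset.prod_range_add]
  congr 1
  refine Finset.prod_congr rfl fun i _ => ?_
  rw [dsc_add]

lemma EdS_full (u : Fin n) : EdS S u n = rho S := by
  unfold EdS rho
  refine Finset.prod_bij' (fun i _ => dsc u i) (fun w _ => dist u w) ?_ ?_ ?_ ?_ ?_
  · intro i _; exact Finset.mem_univ _
  · intro w _; exact Finset.mem_range.2 (dist_lt u w)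
  · intro i hi; exact dist_dsc_self u i (Finset.mem_range.1 hi)
  · intro w _; exact dsc_dist u w
  · intro i _; rfl

variable {S}

lemma cyS_unit (h1 : ∀ a : Fin n, S.Adj a (pr a)) (a : Fin n) :
    cyS S a = 1 ∨ cyS S a = -1 := S.sgn_unit _ _ (h1 a)

lemma EdS_unit (h1 : ∀ a : Fin n, S.Adj a (pr a)) (u : Fin n) (m : ℕ) :
    EdS S u m = 1 ∨ EdS S u m = -1 := by
  induction m with
  | zero => left; simp [EdS]
  | succ m ih =>
      rw [EdS_succ]
      rcases ih with h | h <;> rcases cyS_unit h1 (dsc u m) with h' | h' <;>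
        simp [h, h']

lemma rho_unit (h1 : ∀ a : Fin n, S.Adj a (pr a)) :
    rho S = 1 ∨ rho S = -1 := by
  rw [← EdS_full S v0]; exact EdS_unit h1 v0 n

lemma chord_eq_dsc (hn : 7 ≤ n) (a b : Fin n) (h : a.val + n = b.val + 4) :
    b = dsc a 4 := by
  have ha := a.isLt; have hb := b.isLt
  apply Fin.ext
  rw [dsc_val_le a 4 (by omega)]
  split <;> omega

end Signs

section Arcs

variable {n : ℕ} [NeZero n] {S : SignedDigraph (Fin n)}

lemma arcs_cyc (hn : 7 ≤ n)
    (hadj : S.Adj = B2Adj n ∨ S.Adj = B3Adj n ∨ S.Adj = B4Adj n) :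
    ∀ a : Fin n, S.Adj a (pr a) := by
  intro a
  have ha := a.isLt
  have hpr := pr_val a
  have hcn : CnAdj n a (pr a) := by
    unfold CnAdj
    by_cases h : a.val = 0
    · left; constructor; exact h; simp [h] at hpr; omega
    · right; simp [h] at hpr; omega
  rcases hadj with h | h | h <;> rw [h] <;> exact Or.inl hcn

lemma arcs_chord0 (hn : 7 ≤ n)
    (hadj : S.Adj = B2Adj n ∨ S.Adj = B3Adj n ∨ S.Adj = B4Adj n) :
    S.Adj v0 (dsc v0 4) := by
  have hv : (v0 : Fin n).val = 0 := rfl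
  have hd : (dsc (v0 : Fin n) 4).val = n - 4 := by
    rw [dsc_val_le _ 4 (by omega)]; simp [hv]
  rcases hadj with h | h | h <;> rw [h]
  · exact Or.inr (Or.inl ⟨hv, hd⟩)
  · exact Or.inr (Or.inl ⟨hv, hd⟩)
  · exact Or.inr (Or.inl ⟨hv, hd⟩)

lemma arcs_chord3 (hn : 7 ≤ n)
    (hadj : S.Adj = B2Adj n ∨ S.Adj = B3Adj n ∨ S.Adj = B4Adj n) :
    S.Adj ⟨3, by omega⟩ (dsc (⟨3, by omega⟩ : Fin n) 4) := by
  have hd : (dsc (⟨3, by omega⟩ : Fin n) 4).val = n - 1 := by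
    rw [dsc_val_le _ 4 (by omega)]; simp; omega
  rcases hadj with h | h | h <;> rw [h]
  · exact Or.inr (Or.inr ⟨rfl, hd⟩)
  · exact Or.inr (Or.inr (Or.inr ⟨rfl, hd⟩))
  · exact Or.inr (Or.inr (Or.inr ⟨rfl, hd⟩))

lemma arcs_classify (hn : 7 ≤ n)
    (hadj : S.Adj = B2Adj n ∨ S.Adj = B3Adj n ∨ S.Adj = B4Adj n) :
    ∀ a b : Fin n, S.Adj a b → b = pr a ∨ a.val + n = b.val + 4 := by
  intro a b hab
  have ha := a.isLt; have hb := b.isLt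
  have hpr := pr_val a
  have hcn : CnAdj n a b → b = pr a := by
    intro h
    unfold CnAdj at h
    apply Fin.ext
    rcases h with ⟨h0, h1⟩ | h
    · simp [h0] at hpr; omega
    · have : ¬ a.val = 0 := by omega
      simp [this] at hpr; omega
  rcases hadj with h | h | h <;> rw [h] at hab
  · rcases hab with h' | ⟨h1, h2⟩ | ⟨h1, h2⟩
    · exact Or.inl (hcn h')
    · right; omega
    · right; omega
  · rcases hab with h' | ⟨h1, h2⟩ | ⟨h1, h2⟩ | ⟨h1, h2⟩
    · exact Or.inl (hcn h')
    · right; omega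
    · right; omega
    · right; omega
  · rcases hab with h' | ⟨h1, h2⟩ | ⟨h1, h2⟩ | ⟨h1, h2⟩
    · exact Or.inl (hcn h')
    · right; omega
    · right; omega
    · right; omega

end Arcs

end Stmt10

namespace Stmt10

section Master

variable {n : ℕ} [NeZero n] {S : SignedDigraph (Fin n)}

lemma unit_sq {x : ℤ} (h : x = 1 ∨ x = -1) : x * x = 1 := by rcases h with h | h <;> simp [h]

lemma unit_solve {x e c : ℤ} (he : e = 1 ∨ e = -1) (h : x * e = c) : x = c * e := by
  rcases he with h' | h' <;> rw [h'] at h ⊢ <;> omega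

lemma unit_pow_add_two {x : ℤ} (h : x * x = 1) (k : ℕ) : x ^ (k + 2) = x ^ k := by
  rw [pow_succ, pow_succ, mul_assoc, h, mul_one]

/-- the canonical `(n-3)`-cycle through a chord arc `(a,b)` -/
def cycA {n : ℕ} (a b : Fin n) : ℕ → Fin n := fun i => if i = 0 then a else dsc b (i-1)

lemma cycA_isCycle (hn : 7 ≤ n) (h1 : ∀ a : Fin n, S.Adj a (pr a))
    (a b : Fin n) (h : S.Adj a b) (hv : a.val + n = b.val + 4) :
    IsCycle S.Adj (n-3) (cycA a b) := by
  have hb4 : b = dsc a 4 := chord_eq_dsc hn a b hv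
  refine ⟨?_, ?_, ?_⟩
  · intro i hi
    match i with
    | 0 => simpa [cycA, dsc_zero] using h
    | (j+1) =>
        have e1 : cycA a b (j+1) = dsc b j := by simp [cycA]
        have e2 : cycA a b (j+2) = dsc b (j+1) := by simp [cycA]
        rw [e1, e2, dsc_succ]
        exact h1 _
  · have h3 : ¬ (n - 3 = 0) := by omega
    have e1 : cycA a b (n-3) = dsc b (n-3-1) := by simp [cycA, h3]
    have e34 : n - 3 - 1 = n - 4 := by omega
    have e2 : dsc b (n-4) = a := by
      rw [hb4, ← dsc_add]
      have : 4 + (n-4) = n := by omega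
      rw [this, dsc_n]
    show cycA a b (n-3) = cycA a b 0
    rw [e1, e34, e2]
    simp [cycA]
  · intro i hi j hj hij
    match i, j with
    | 0, 0 => rfl
    | 0, (j+1) =>
        exfalso
        have e1 : cycA a b 0 = a := by simp [cycA]
        have e2 : cycA a b (j+1) = dsc b j := by simp [cycA]
        rw [e1, e2, hb4, ← dsc_add] at hij
        have := dsc_inj a 0 (4+j) (by omega) (by omega) (by simpa [dsc_zero] using hij)
        omega
    | (i+1), 0 =>
        exfalso
        have e1 : cycA a b 0 = a := by simp [cycA]
        have e2 : cycA a b (i+1) = dsc b i := by simp [cycA]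
        rw [e1, e2, hb4, ← dsc_add] at hij
        have := dsc_inj a (4+i) 0 (by omega) (by omega) (by simpa [dsc_zero] using hij)
        omega
    | (i+1), (j+1) =>
        have e1 : cycA a b (i+1) = dsc b i := by simp [cycA]
        have e2 : cycA a b (j+1) = dsc b j := by simp [cycA]
        rw [e1, e2] at hij
        have := dsc_inj b i j (by omega) (by omega) hij
        omega

lemma cycA_sign (hn : 7 ≤ n) (a b : Fin n) :
    S.walkSign (n-3) (cycA a b) = S.sgn a b * EdS S b (n-4) := by
  unfold SignedDigraph.walkSign
  have h34 : n - 3 = (n-4) + 1 := by omega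
  have e0 : S.sgn (cycA a b 0) (cycA a b (0+1)) = S.sgn a b := by
    have ea : cycA a b 0 = a := by simp [cycA]
    have eb : cycA a b (0+1) = b := by simp [cycA, dsc_zero]
    rw [ea, eb]
  have eprod : ∏ k ∈ Finset.range (n-4), S.sgn (cycA a b (k+1)) (cycA a b (k+1+1))
      = EdS S b (n-4) := by
    unfold EdS
    refine Finset.prod_congr rfl fun i _ => ?_
    have e1 : cycA a b (i+1) = dsc b i := by simp [cycA]
    have e2 : cycA a b (i+1+1) = dsc b (i+1) := by simp [cycA]
    rw [e1, e2, dsc_succ]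
    rfl
  rw [h34, Finset.prod_range_succ', eprod, e0, mul_comm]

/-- all chords have the sign forced by `SameSignCycles (n-3)` -/
lemma chord_sign (hn : 7 ≤ n) (h1 : ∀ a : Fin n, S.Adj a (pr a))
    (hc0 : S.Adj v0 (dsc v0 4))
    (hsgn : S.SameSignCycles (n-3))
    (a b : Fin n) (h : S.Adj a b) (hv : a.val + n = b.val + 4) :
    S.sgn a b * EdS S b (n-4) = sg S := by
  have h0 : (v0 : Fin n).val = 0 := rfl
  have hdv : (dsc (v0 : Fin n) 4).val = n - 4 := by
    rw [dsc_val_le _ 4 (by omega), h0]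
    simp
  have hv0 : (v0 : Fin n).val + n = (dsc (v0 : Fin n) 4).val + 4 := by
    rw [h0, hdv]; omega
  have key := hsgn (cycA a b) (cycA v0 (dsc v0 4))
    (cycA_isCycle hn h1 a b h hv) (cycA_isCycle hn h1 v0 (dsc v0 4) hc0 hv0)
  rw [cycA_sign hn, cycA_sign hn] at key
  rw [key]; rfl

lemma chord_sign' (hn : 7 ≤ n) (h1 : ∀ a : Fin n, S.Adj a (pr a))
    (hc0 : S.Adj v0 (dsc v0 4))
    (hsgn : S.SameSignCycles (n-3))
    (a b : Fin n) (h : S.Adj a b) (hv : a.val + n = b.val + 4) :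
    S.sgn a b = sg S * rho S * EdS S a 4 := by
  have hb4 : b = dsc a 4 := chord_eq_dsc hn a b hv
  have hfull : EdS S a 4 * EdS S b (n-4) = rho S := by
    rw [hb4, ← EdS_add]
    have : 4 + (n-4) = n := by omega
    rw [this, EdS_full]
  have hu1 : EdS S b (n-4) = 1 ∨ EdS S b (n-4) = -1 := EdS_unit h1 b (n-4)
  have hu4 : EdS S a 4 = 1 ∨ EdS S a 4 = -1 := EdS_unit h1 a 4
  have h5 := chord_sign hn h1 hc0 hsgn a b h hv
  have hx : S.sgn a b = sg S * EdS S b (n-4) := unit_solve hu1 h5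
  have hfull' : EdS S b (n-4) * EdS S a 4 = rho S := by rw [mul_comm]; exact hfull
  have he : EdS S b (n-4) = rho S * EdS S a 4 := unit_solve hu4 hfull'
  rw [hx, he]; ring

lemma cc_succ {n : ℕ} (f : ℕ → Fin n) (t : ℕ) :
    cc f (t+1) = cc f t + (if (f t).val + n = (f (t+1)).val + 4 then 1 else 0) := by
  unfold cc
  rw [Finset.range_add_one, Finset.filter_insert]
  split
  · rw [Finset.card_insert_of_notMem (by simp)]
  · simp

lemma walkSign_succ (S : SignedDigraph (Fin n)) (f : ℕ → Fin n) (t : ℕ) :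
    S.walkSign (t+1) f = S.walkSign t f * S.sgn (f t) (f (t+1)) :=
  Finset.prod_range_succ _ _

lemma isWalk_mono {V : Type*} {A : V → V → Prop} {t s : ℕ} {f : ℕ → V}
    (h : IsWalk A t f) (hst : s ≤ t) : IsWalk A s f :=
  fun i hi => h i (lt_of_lt_of_le hi hst)

/-- **Master lemma**: sign of any walk is determined by endpoints, length and
number of chord steps. -/
lemma master (hn : 7 ≤ n) (h1 : ∀ a : Fin n, S.Adj a (pr a))
    (h4 : ∀ a b : Fin n, S.Adj a b → b = pr a ∨ a.val + n = b.val + 4)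
    (h5 : ∀ a b : Fin n, S.Adj a b → a.val + n = b.val + 4 →
      S.sgn a b = sg S * rho S * EdS S a 4)
    (f : ℕ → Fin n) :
    ∀ t, IsWalk S.Adj t f →
    ∃ W, t + 3 * cc f t = dist (f 0) (f t) + n * W ∧
      S.walkSign t f = EdS S (f 0) (dist (f 0) (f t)) * rho S ^ (W + cc f t)
        * sg S ^ (cc f t) := by
  intro t
  induction t with
  | zero =>
      intro _
      refine ⟨0, ?_, ?_⟩
      · simp [cc, dist_self]
      · simp [cc, dist_self, EdS_zero, SignedDigraph.walkSign]
  | succ t ih =>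
      intro hw
      obtain ⟨W, hEq, hSign⟩ := ih (isWalk_mono hw (by omega))
      have harc : S.Adj (f t) (f (t+1)) := hw t (by omega)
      have hd' : dist (f 0) (f t) < n := dist_lt _ _
      have hrho2 : rho S * rho S = 1 := unit_sq (rho_unit h1)
      rcases h4 _ _ harc with hb | hb
      · -- cycle arc
        have hnc : ¬ ((f t).val + n = (f (t+1)).val + 4) := by
          have hpr := pr_val (f t)
          have := (f t).isLt
          rw [hb, hpr]
          split <;> omega
        have hccs : cc f (t+1) = cc f t := by rw [cc_succ, if_neg hnc]; omega
        have hdist : dist (f 0) (f (t+1)) =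
            if dist (f 0) (f t) + 1 < n then dist (f 0) (f t) + 1
            else dist (f 0) (f t) + 1 - n := by
          rw [hb, ← dsc_one, dist_dsc _ _ 1 (by omega)]
        have hws := walkSign_succ S f t
        have hcys : S.sgn (f t) (f (t+1)) = cyS S (dsc (f 0) (dist (f 0) (f t))) := by
          rw [dsc_dist, hb]; rfl
        by_cases hlt : dist (f 0) (f t) + 1 < n
        · refine ⟨W, ?_, ?_⟩
          · rw [hccs, hdist, if_pos hlt]; omega
          · rw [hws, hSign, hccs, hdist, if_pos hlt, EdS_succ]
            rw [hcys]; ring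
        · -- wrap-around
          have hd0 : dist (f 0) (f t) = n - 1 := by omega
          refine ⟨W + 1, ?_, ?_⟩
          · rw [hccs, hdist, if_neg hlt]
            have : n * (W+1) = n * W + n := by ring
            omega
          · rw [hws, hSign, hccs, hdist, if_neg hlt]
            have hz : dist (f 0) (f t) + 1 - n = 0 := by omega
            rw [hz, EdS_zero]
            have hfull : EdS S (f 0) (dist (f 0) (f t)) *
                cyS S (dsc (f 0) (dist (f 0) (f t))) = rho S := by
              rw [← EdS_succ, hd0]
              have : n - 1 + 1 = n := by omega
              rw [this, EdS_full]
            rw [hcys, show W + 1 + cc f t = (W + cc f t) + 1 by omega, pow_succ]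
            linear_combination (rho S ^ (W + cc f t) * sg S ^ (cc f t)) * hfull
      · -- chord arc
        have hb4 : f (t+1) = dsc (f t) 4 := chord_eq_dsc hn _ _ hb
        have hccs : cc f (t+1) = cc f t + 1 := by rw [cc_succ, if_pos hb]
        have hdist : dist (f 0) (f (t+1)) =
            if dist (f 0) (f t) + 4 < n then dist (f 0) (f t) + 4
            else dist (f 0) (f t) + 4 - n := by
          rw [hb4, dist_dsc _ _ 4 (by omega)]
        have hws := walkSign_succ S f t
        have hsgnc := h5 _ _ harc hb
        have hEsplit : EdS S (f 0) (dist (f 0) (f t) + 4)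
            = EdS S (f 0) (dist (f 0) (f t)) * EdS S (f t) 4 := by
          rw [EdS_add, dsc_dist]
        by_cases hlt : dist (f 0) (f t) + 4 < n
        · refine ⟨W, ?_, ?_⟩
          · rw [hccs, hdist, if_pos hlt]; omega
          · rw [hws, hSign, hccs, hdist, if_pos hlt, hEsplit, hsgnc]
            rw [show W + (cc f t + 1) = (W + cc f t) + 1 by omega,
              pow_succ, pow_succ]
            ring
        · -- wrap-around chord
          refine ⟨W + 1, ?_, ?_⟩
          · rw [hccs, hdist, if_neg hlt]
            have : n * (W+1) = n * W + n := by ring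
            omega
          · rw [hws, hSign, hccs, hdist, if_neg hlt, hsgnc]
            have hsplit2 : EdS S (f 0) (dist (f 0) (f t) + 4)
                = EdS S (f 0) (dist (f 0) (f t) + 4 - n) * rho S := by
              have hds : dist (f 0) (f t) + 4 = (dist (f 0) (f t) + 4 - n) + n := by omega
              nth_rewrite 1 [hds]
              rw [EdS_add, EdS_full]
            have key : EdS S (f 0) (dist (f 0) (f t)) * EdS S (f t) 4
                = EdS S (f 0) (dist (f 0) (f t) + 4 - n) * rho S := by
              rw [← hEsplit, hsplit2]
            have hrw : EdS S (f 0) (dist (f 0) (f t)) * EdS S (f t) 4 * rho S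
                = EdS S (f 0) (dist (f 0) (f t) + 4 - n) := by
              rw [key, mul_assoc, hrho2, mul_one]
            rw [show W + 1 + (cc f t + 1) = W + cc f t + 2 by omega,
              unit_pow_add_two hrho2, ← hrw, pow_succ]
            ring
  
end Master

end Stmt10

namespace Stmt10

section Bound

variable {n : ℕ} [NeZero n] {S : SignedDigraph (Fin n)}

lemma cc_mono {n : ℕ} (f : ℕ → Fin n) {i j : ℕ} (h : i ≤ j) : cc f i ≤ cc f j := by
  unfold cc
  exact Finset.card_le_card (Finset.filter_subset_filter _
    (Finset.range_subset_range.2 h))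

/-- lifted-position invariant -/
lemma lift_inv (hn : 7 ≤ n)
    (h4 : ∀ a b : Fin n, S.Adj a b → b = pr a ∨ a.val + n = b.val + 4)
    (f : ℕ → Fin n) (t : ℕ) (hf : IsWalk S.Adj t f) :
    ∀ i ≤ t, ∃ k : ℕ, i + 3 * cc f i + (f i).val = (f 0).val + n * k := by
  intro i hi
  induction i with
  | zero => exact ⟨0, by simp [cc]⟩
  | succ i ih =>
      obtain ⟨k, hk⟩ := ih (by omega)
      have harc := hf i (by omega)
      have hcs := cc_succ f i
      have hlt := (f i).isLt
      have hlt1 := (f (i+1)).isLt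
      rcases h4 _ _ harc with hb | hb
      · have hpr := pr_val (f i)
        rw [hb] at hcs ⊢
        have hnc : ¬ ((f i).val + n = (pr (f i)).val + 4) := by
          rw [hpr]; split <;> omega
        rw [if_neg hnc] at hcs
        by_cases h0 : (f i).val = 0
        · refine ⟨k + 1, ?_⟩
          rw [hpr, if_pos h0]
          have : n * (k+1) = n * k + n := by ring
          omega
        · refine ⟨k, ?_⟩
          rw [hpr, if_neg h0]
          omega
      · rw [if_pos hb] at hcs
        refine ⟨k + 1, ?_⟩
        have : n * (k+1) = n * k + n := by ring
        omega

/-- The number of chord steps is at most `W + χ`. -/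
lemma cc_le (hn : 7 ≤ n)
    (h4 : ∀ a b : Fin n, S.Adj a b → b = pr a ∨ a.val + n = b.val + 4)
    (f : ℕ → Fin n) (t : ℕ) (hf : IsWalk S.Adj t f) (W : ℕ)
    (hEq : t + 3 * cc f t = dist (f 0) (f t) + n * W) :
    cc f t ≤ W + (if (f 0).val < (f t).val then 1 else 0) := by
  have hnpos : 0 < n := by omega
  set χ := (if (f 0).val < (f t).val then 1 else 0) with hχ
  set ψ : ℕ → ℕ := fun i => (i + 3 * cc f i + (f i).val - (f 0).val) / n with hψ
  -- key facts about chord steps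
  have hstep : ∀ i ∈ (Finset.range t).filter
      (fun i => (f i).val + n = (f (i+1)).val + 4),
      n * ψ i = i + 3 * cc f i + (f i).val - (f 0).val ∧
      (f i).val ≤ 3 ∧ i + 3 * cc f i + 4 ≤ t + 3 * cc f t ∧
      (f 0).val ≤ i + 3 * cc f i + (f i).val := by
    intro i hi
    rw [Finset.mem_filter, Finset.mem_range] at hi
    obtain ⟨hit, hchord⟩ := hi
    obtain ⟨k, hk⟩ := lift_inv hn h4 f t hf i (by omega)
    have hlt1 := (f (i+1)).isLt
    have hf3 : (f i).val ≤ 3 := by omega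
    have hccs : cc f (i+1) = cc f i + 1 := by rw [cc_succ, if_pos hchord]
    have hmono : cc f (i+1) ≤ cc f t := cc_mono f (by omega : i+1 ≤ t)
    refine ⟨?_, hf3, by omega, by omega⟩
    have : i + 3 * cc f i + (f i).val - (f 0).val = n * k := by omega
    rw [hψ]; simp only []
    rw [this, Nat.mul_div_cancel_left _ hnpos]
  have hu := (f 0).isLt
  have hv := (f t).isLt
  have hdistv : dist (f 0) (f t) + (f t).val = (f 0).val + n * χ := by
    unfold dist
    rw [hχ]
    split <;> split <;> omega
  have hmaps : ∀ i ∈ (Finset.range t).filter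
      (fun i => (f i).val + n = (f (i+1)).val + 4), ψ i ∈ Finset.range (W + χ) := by
    intro i hi
    obtain ⟨hn1, hf3, hsum, hge⟩ := hstep i hi
    rw [Finset.mem_range]
    have hup : n * ψ i < n * (W + χ) := by
      have h2 : n * (W + χ) = n * W + n * χ := by ring
      omega
    exact lt_of_mul_lt_mul_left hup (by omega)
  have hinj : Set.InjOn ψ ((Finset.range t).filter
      (fun i => (f i).val + n = (f (i+1)).val + 4)) := by
    intro i hi j hj hij
    obtain ⟨hit, hchordi⟩ : i < t ∧ (f i).val + n = (f (i+1)).val + 4 := by simpa using hi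
    obtain ⟨hjt, hchordj⟩ : j < t ∧ (f j).val + n = (f (j+1)).val + 4 := by simpa using hj
    obtain ⟨hi1, hi3, hisum, hige⟩ := hstep i (by simp [hit, hchordi])
    obtain ⟨hj1, hj3, hjsum, hjge⟩ := hstep j (by simp [hjt, hchordj])
    by_contra hne
    rcases Nat.lt_or_ge i j with hlt | hge'
    · have hccs : cc f (i+1) = cc f i + 1 := by rw [cc_succ, if_pos hchordi]
      have hmono : cc f (i+1) ≤ cc f j := cc_mono f (by omega : i+1 ≤ j)
      have : n * ψ i = n * ψ j := by rw [hij]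
      omega
    · have hlt : j < i := by omega
      have hccs : cc f (j+1) = cc f j + 1 := by rw [cc_succ, if_pos hchordj]
      have hmono : cc f (j+1) ≤ cc f i := cc_mono f (by omega : j+1 ≤ i)
      have : n * ψ i = n * ψ j := by rw [hij]
      omega
  have := Finset.card_le_card_of_injOn ψ hmaps hinj
  simpa [cc, Finset.card_range] using this

end Bound

end Stmt10

namespace Stmt10

section Constructions

variable {n : ℕ} [NeZero n] {S : SignedDigraph (Fin n)}

/-- existence of a walk with prescribed endpoints, length and chord count -/
def Wk (S : SignedDigraph (Fin n)) (u v : Fin n) (t s : ℕ) : Prop :=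
  ∃ f : ℕ → Fin n, f 0 = u ∧ f t = v ∧ IsWalk S.Adj t f ∧ cc f t = s

lemma wk_cast {u v : Fin n} {t s t' s' : ℕ} (h : Wk S u v t s)
    (ht : t = t') (hs : s = s') : Wk S u v t' s' := ht ▸ hs ▸ h

lemma cc_congr {n : ℕ} {f g : ℕ → Fin n} {t : ℕ} (h : ∀ i ≤ t, f i = g i) :
    cc f t = cc g t := by
  unfold cc
  congr 1
  apply Finset.filter_congr
  intro i hi
  rw [Finset.mem_range] at hi
  rw [h i (by omega), h (i+1) (by omega)]

lemma wk_extend {u a b : Fin n} {t s : ℕ} (h : Wk S u a t s) (hab : S.Adj a b) :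
    Wk S u b (t+1) (s + if a.val + n = b.val + 4 then 1 else 0) := by
  obtain ⟨f, hf0, hft, hfw, hfc⟩ := h
  refine ⟨fun i => if i ≤ t then f i else b, by simp [hf0], by simp, ?_, ?_⟩
  · intro i hi
    rcases Nat.lt_or_ge i t with hlt | hge
    · simp only [if_pos (by omega : i ≤ t), if_pos (by omega : i + 1 ≤ t)]
      exact hfw i hlt
    · have hit : i = t := by omega
      simp only []
      rw [if_pos (by omega : i ≤ t), if_neg (by omega : ¬ i + 1 ≤ t), hit, hft]
      exact hab
  · have hcg : cc (fun i => if i ≤ t then f i else b) t = cc f t :=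
      cc_congr (fun i hi => by simp [hi])
    rw [cc_succ, hcg, hfc]
    simp only [if_pos (le_refl t), if_neg (by omega : ¬ t + 1 ≤ t), hft]

lemma wk_comp {u w v : Fin n} {t1 s1 t2 s2 : ℕ}
    (h1 : Wk S u w t1 s1) (h2 : Wk S w v t2 s2) : Wk S u v (t1+t2) (s1+s2) := by
  induction t2 generalizing v s2 with
  | zero =>
      obtain ⟨f, hf0, hft, _, hfc⟩ := h2
      have : v = w := by rw [← hft, hf0]
      have hs : s2 = 0 := by rw [← hfc]; simp [cc]
      subst this; subst hs
      simpa using h1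
  | succ t2 ih =>
      obtain ⟨f, hf0, hft, hfw, hfc⟩ := h2
      have hmid : Wk S w (f t2) t2 (cc f t2) :=
        ⟨f, hf0, rfl, isWalk_mono hfw (by omega), rfl⟩
      have harc : S.Adj (f t2) (f (t2+1)) := hfw t2 (by omega)
      have hext := wk_extend (ih hmid) harc
      rw [hft] at hext
      refine wk_cast hext (by omega) ?_
      have hstep := cc_succ f t2
      rw [hft] at hstep
      omega

lemma wk_dsc (hn : 7 ≤ n) (h1 : ∀ a : Fin n, S.Adj a (pr a)) (u : Fin n) (m : ℕ) :
    Wk S u (dsc u m) m 0 := by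
  refine ⟨dsc u, dsc_zero u, rfl, ?_, ?_⟩
  · intro i _
    rw [dsc_succ]
    exact h1 _
  · unfold cc
    rw [Finset.card_eq_zero, Finset.filter_eq_empty_iff]
    intro i _
    rw [dsc_succ, pr_val]
    have := (dsc u i).isLt
    split <;> omega

lemma wk_chord (a b : Fin n) (hab : S.Adj a b) (hv : a.val + n = b.val + 4) :
    Wk S a b 1 1 := by
  refine ⟨fun i => if i = 0 then a else b, by simp, by simp, ?_, ?_⟩
  · intro i hi
    have : i = 0 := by omega
    subst this
    simpa using hab
  · unfold cc
    rw [show Finset.range 1 = {0} from rfl]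
    rw [Finset.filter_eq_self.2 (by simpa using hv)]
    rfl

lemma wk_iter {a : Fin n} {T s : ℕ} (h : Wk S a a T s) :
    ∀ m : ℕ, Wk S a a (m*T) (m*s) := by
  intro m
  induction m with
  | zero => exact ⟨fun _ => a, rfl, rfl, fun i hi => by omega, by simp [cc]⟩
  | succ m ih =>
      have := wk_comp ih h
      refine wk_cast this (by ring) (by ring)

lemma wk_cycle (hn : 7 ≤ n) (h1 : ∀ a : Fin n, S.Adj a (pr a)) (u : Fin n) (m : ℕ) :
    Wk S u u (m*n) 0 := by
  have h := wk_dsc hn h1 u n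
  rw [dsc_n] at h
  exact wk_cast (wk_iter h m) rfl (by ring)

lemma chordval0 (hn : 7 ≤ n) : (v0 : Fin n).val + n = (dsc (v0 : Fin n) 4).val + 4 := by
  have h0 : (v0 : Fin n).val = 0 := rfl
  have hdv : (dsc (v0 : Fin n) 4).val = n - 4 := by
    rw [dsc_val_le _ 4 (by omega), h0]; simp
  rw [h0, hdv]; omega

lemma chordval3 (hn : 7 ≤ n) :
    ((⟨3, by omega⟩ : Fin n)).val + n = (dsc (⟨3, by omega⟩ : Fin n) 4).val + 4 := by
  have hdv : (dsc (⟨3, by omega⟩ : Fin n) 4).val = n - 1 := by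
    rw [dsc_val_le _ 4 (by omega)]; simp; omega
  rw [hdv]; simp; omega

lemma wk_loop0 (hn : 7 ≤ n) (h1 : ∀ a : Fin n, S.Adj a (pr a))
    (hc0 : S.Adj v0 (dsc v0 4)) : Wk S (v0 : Fin n) v0 (n-3) 1 := by
  have h := wk_comp (wk_chord v0 (dsc v0 4) hc0 (chordval0 hn)) (wk_dsc hn h1 (dsc v0 4) (n-4))
  rw [← dsc_add, (show 4+(n-4) = n by omega), dsc_n] at h
  exact wk_cast h (by omega) rfl

lemma wk_loop3 (hn : 7 ≤ n) (h1 : ∀ a : Fin n, S.Adj a (pr a))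
    (hc3 : S.Adj (⟨3, by omega⟩ : Fin n) (dsc (⟨3, by omega⟩ : Fin n) 4)) :
    Wk S (⟨3, by omega⟩ : Fin n) ⟨3, by omega⟩ (n-3) 1 := by
  have h := wk_comp (wk_chord _ _ hc3 (chordval3 hn)) (wk_dsc hn h1 (dsc (⟨3, by omega⟩ : Fin n) 4) (n-4))
  rw [← dsc_add, (show 4+(n-4) = n by omega), dsc_n] at h
  exact wk_cast h (by omega) rfl

end Constructions

end Stmt10

namespace Stmt10

section ConstructionsAC

variable {n : ℕ} [NeZero n] {S : SignedDigraph (Fin n)}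

lemma dsc_to_v0 (hn : 7 ≤ n) (u : Fin n) : dsc u u.val = v0 := by
  apply Fin.ext
  rw [dsc_val_le u u.val (by omega)]
  simp [v0]

lemma dsc_v0_to (hn : 7 ≤ n) (v : Fin n) (hv : v.val ≠ 0) : dsc (v0 : Fin n) (n - v.val) = v := by
  have hvl := v.isLt
  apply Fin.ext
  rw [dsc_val_le _ (n - v.val) (by omega)]
  have h0 : (v0 : Fin n).val = 0 := rfl
  rw [h0]
  split <;> omega

/-- Construction A : descend to `0`, do `s` chord loops at `0`, pad with
Hamilton cycles, then descend to `v`. -/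
lemma conA (hn : 7 ≤ n) (h1 : ∀ a : Fin n, S.Adj a (pr a))
    (hc0 : S.Adj v0 (dsc v0 4)) (u v : Fin n) (s W t : ℕ)
    (hEq : t + 3*s = dist u v + n*W) (hW : s + 1 ≤ W) : Wk S u v t s := by
  have hu := u.isLt; have hv := v.isLt
  have c1 : Wk S u v0 u.val 0 := by
    have h := wk_dsc hn h1 u u.val
    rwa [dsc_to_v0 hn] at h
  have c2 : Wk S (v0 : Fin n) v0 (s*(n-3)) s :=
    wk_cast (wk_iter (wk_loop0 hn h1 hc0) s) rfl (by ring)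
  have e1 : s*(n-3) + s*3 = s*n := by
    rw [← Nat.mul_add, show n-3+3 = n by omega]
  by_cases hv0 : v.val = 0
  · have hveq : v = v0 := Fin.ext hv0
    obtain ⟨α, hα⟩ : ∃ α, W = α + s := ⟨W - s, by omega⟩
    have c3 : Wk S (v0 : Fin n) v0 (α*n) 0 := wk_cycle hn h1 v0 α
    have total := wk_comp c1 (wk_comp c2 c3)
    rw [← hveq] at total
    refine wk_cast total ?_ (by omega)
    have hdist : dist u v = u.val := by unfold dist; rw [if_pos (by omega)]; omega
    have e2 : (α+s)*n = α*n + s*n := by ring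
    have e3 : n*W = (α+s)*n := by rw [← hα]; ring
    omega
  · have c4 : Wk S (v0 : Fin n) v (n - v.val) 0 := by
      have h := wk_dsc hn h1 v0 (n - v.val)
      rwa [dsc_v0_to hn v hv0] at h
    by_cases hvu : v.val ≤ u.val
    · obtain ⟨α, hα⟩ : ∃ α, W = α + s + 1 := ⟨W - s - 1, by omega⟩
      have c3 : Wk S (v0 : Fin n) v0 (α*n) 0 := wk_cycle hn h1 v0 α
      have total := wk_comp c1 (wk_comp c2 (wk_comp c3 c4))
      refine wk_cast total ?_ (by omega)
      have hdist : dist u v = u.val - v.val := by unfold dist; rw [if_pos hvu]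
      have e2 : (α+s+1)*n = α*n + s*n + n := by ring
      have e3 : n*W = (α+s+1)*n := by rw [← hα]; ring
      omega
    · obtain ⟨α, hα⟩ : ∃ α, W = α + s := ⟨W - s, by omega⟩
      have c3 : Wk S (v0 : Fin n) v0 (α*n) 0 := wk_cycle hn h1 v0 α
      have total := wk_comp c1 (wk_comp c2 (wk_comp c3 c4))
      refine wk_cast total ?_ (by omega)
      have hdist : dist u v = u.val + n - v.val := by unfold dist; rw [if_neg hvu]
      have e2 : (α+s)*n = α*n + s*n := by ring
      have e3 : n*W = (α+s)*n := by rw [← hα]; ring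
      omega

/-- Construction C : pad with Hamilton cycles at `u`, descend to `0`, chord to
`n-4`, descend to `3`, do `s-2` chord loops at `3`, chord to `n-1`, descend to `v`. -/
lemma conC (hn : 7 ≤ n) (h1 : ∀ a : Fin n, S.Adj a (pr a))
    (hc0 : S.Adj v0 (dsc v0 4))
    (hc3 : S.Adj (⟨3, by omega⟩ : Fin n) (dsc (⟨3, by omega⟩ : Fin n) 4))
    (u v : Fin n) (s W t : ℕ)
    (hEq : t + 3*s = dist u v + n*W) (hs2 : 2 ≤ s)
    (hW : if v.val ≤ u.val then s ≤ W else s ≤ W + 1) : Wk S u v t s := by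
  have hu := u.isLt; have hv := v.isLt
  have e30 : dsc (dsc (v0 : Fin n) 4) (n-7) = (⟨3, by omega⟩ : Fin n) := by
    rw [← dsc_add, show 4 + (n-7) = n - 3 by omega]
    apply Fin.ext
    rw [dsc_val_le _ (n-3) (by omega)]
    have h0 : (v0 : Fin n).val = 0 := rfl
    rw [h0]
    split <;> simp <;> omega
  have e3v : (dsc (⟨3, by omega⟩ : Fin n) 4).val = n - 1 := by
    rw [dsc_val_le _ 4 (by omega)]; simp; omega
  have e6 : dsc (dsc (⟨3, by omega⟩ : Fin n) 4) (n - 1 - v.val) = v := by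
    apply Fin.ext
    rw [dsc_val_le _ (n-1-v.val) (by omega), e3v]
    split <;> omega
  have c1 : Wk S u v0 u.val 0 := by
    have h := wk_dsc hn h1 u u.val
    rwa [dsc_to_v0 hn] at h
  have c2 : Wk S (v0 : Fin n) (dsc v0 4) 1 1 := wk_chord _ _ hc0 (chordval0 hn)
  have c3 : Wk S (dsc (v0 : Fin n) 4) (⟨3, by omega⟩ : Fin n) (n-7) 0 := by
    have h := wk_dsc hn h1 (dsc (v0 : Fin n) 4) (n-7)
    rwa [e30] at h
  have c4 : Wk S (⟨3, by omega⟩ : Fin n) ⟨3, by omega⟩ ((s-2)*(n-3)) (s-2) :=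
    wk_cast (wk_iter (wk_loop3 hn h1 hc3) (s-2)) rfl (by ring)
  have c5 : Wk S (⟨3, by omega⟩ : Fin n) (dsc (⟨3, by omega⟩ : Fin n) 4) 1 1 :=
    wk_chord _ _ hc3 (chordval3 hn)
  have c6 : Wk S (dsc (⟨3, by omega⟩ : Fin n) 4) v (n-1-v.val) 0 := by
    have h := wk_dsc hn h1 (dsc (⟨3, by omega⟩ : Fin n) 4) (n-1-v.val)
    rwa [e6] at h
  have e1 : s*(n-3) + s*3 = s*n := by
    rw [← Nat.mul_add, show n-3+3 = n by omega]
  have e2 : (s-2)*(n-3) + 2*(n-3) = s*(n-3) := by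
    rw [← Nat.add_mul, show s-2+2 = s by omega]
  by_cases hvu : v.val ≤ u.val
  · rw [if_pos hvu] at hW
    obtain ⟨α, hα⟩ : ∃ α, W = α + s := ⟨W - s, by omega⟩
    have c0 : Wk S u u (α*n) 0 := wk_cycle hn h1 u α
    have total := wk_comp c0 (wk_comp c1 (wk_comp c2 (wk_comp c3
      (wk_comp c4 (wk_comp c5 c6)))))
    refine wk_cast total ?_ (by omega)
    have hdist : dist u v = u.val - v.val := by unfold dist; rw [if_pos hvu]
    have e4 : (α+s)*n = α*n + s*n := by ring
    have e5 : n*W = (α+s)*n := by rw [← hα]; ring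
    omega
  · rw [if_neg hvu] at hW
    obtain ⟨α, hα⟩ : ∃ α, W + 1 = α + s := ⟨W + 1 - s, by omega⟩
    have c0 : Wk S u u (α*n) 0 := wk_cycle hn h1 u α
    have total := wk_comp c0 (wk_comp c1 (wk_comp c2 (wk_comp c3
      (wk_comp c4 (wk_comp c5 c6)))))
    refine wk_cast total ?_ (by omega)
    have hdist : dist u v = u.val + n - v.val := by unfold dist; rw [if_neg hvu]
    have e4 : (α+s)*n = α*n + s*n := by ring
    have e5 : n*W + n = (α+s)*n := by rw [← hα]; ring
    omega

end ConstructionsAC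

end Stmt10

namespace Stmt10

section Eps

variable {n : ℕ} [NeZero n] {S : SignedDigraph (Fin n)}

lemma unit_pow {x : ℤ} (h : x = 1 ∨ x = -1) (k : ℕ) : x ^ k = 1 ∨ x ^ k = -1 := by
  induction k with
  | zero => left; exact pow_zero x
  | succ k ih =>
      rcases ih with h' | h' <;> rcases h with h'' | h'' <;>
        rw [pow_succ, h', h''] <;> norm_num

lemma unit_mul {x y : ℤ} (hx : x = 1 ∨ x = -1) (hy : y = 1 ∨ y = -1) :
    x * y = 1 ∨ x * y = -1 := by
  rcases hx with h | h <;> rcases hy with h' | h' <;> simp [h, h']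

lemma sg_unit (h1 : ∀ a : Fin n, S.Adj a (pr a)) (hc0 : S.Adj v0 (dsc v0 4)) :
    sg S = 1 ∨ sg S = -1 :=
  unit_mul (S.sgn_unit _ _ hc0) (EdS_unit h1 _ _)

lemma cop3 (hn : 7 ≤ n) (hgcd : Nat.gcd n (n - 3) = 1) : Nat.Coprime n 3 := by
  have h1 : Nat.gcd n 3 ∣ n := Nat.gcd_dvd_left _ _
  have h2 : Nat.gcd n 3 ∣ 3 := Nat.gcd_dvd_right _ _
  have h3 : Nat.gcd n 3 ∣ (n-3) := Nat.dvd_sub h1 h2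
  have h4 : Nat.gcd n 3 ∣ Nat.gcd n (n-3) := Nat.dvd_gcd h1 h3
  rw [hgcd] at h4
  exact Nat.dvd_one.mp h4

/-- nonpowerfulness forces `ρ^(n+3) σ^n = -1` -/
lemma eps_neg (hn : 7 ≤ n) (hcop : Nat.Coprime n 3)
    (h1 : ∀ a : Fin n, S.Adj a (pr a))
    (hc0 : S.Adj v0 (dsc v0 4))
    (h4 : ∀ a b : Fin n, S.Adj a b → b = pr a ∨ a.val + n = b.val + 4)
    (h5 : ∀ a b : Fin n, S.Adj a b → a.val + n = b.val + 4 →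
      S.sgn a b = sg S * rho S * EdS S a 4)
    (hpn : S.IsPrimitiveNonpowerful) :
    rho S ^ (n+3) * sg S ^ n = -1 := by
  have hεu : rho S ^ (n+3) * sg S ^ n = 1 ∨ rho S ^ (n+3) * sg S ^ n = -1 :=
    unit_mul (unit_pow (rho_unit h1) _) (unit_pow (sg_unit h1 hc0) _)
  rcases hεu with hε | hε
  · exfalso
    obtain ⟨l, hl0, hl⟩ := hpn
    obtain ⟨f, g, ⟨hf0, hft, hfw⟩, ⟨hg0, hgt, hgw⟩, hne⟩ := hl l (le_refl l) v0 v0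
    obtain ⟨Wf, hEf, hSf⟩ := master hn h1 h4 h5 f l hfw
    obtain ⟨Wg, hEg, hSg⟩ := master hn h1 h4 h5 g l hgw
    rw [hf0, hft, dist_self] at hEf hSf
    rw [hg0, hgt, dist_self] at hEg hSg
    rw [EdS_zero, one_mul] at hSf hSg
    -- key claim, symmetric in the two walks
    have key : ∀ (cf Wf cg Wg : ℕ), l + 3*cf = 0 + n*Wf → l + 3*cg = 0 + n*Wg →
        cf ≤ cg → rho S ^ (Wg + cg) * sg S ^ cg = rho S ^ (Wf + cf) * sg S ^ cf := by
      intro cf Wf cg Wg h1' h2' hle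
      have hWle : n * Wf ≤ n * Wg := by omega
      have hWle' : Wf ≤ Wg := Nat.le_of_mul_le_mul_left hWle (by omega)
      have hdvd : n ∣ 3 * (cg - cf) := ⟨Wg - Wf, by
        have e1 : n * (Wg - Wf) + n * Wf = n * Wg := by
          rw [← Nat.mul_add, Nat.sub_add_cancel hWle']
        omega⟩
      obtain ⟨e, he⟩ := (Nat.Coprime.dvd_of_dvd_mul_left hcop hdvd)
      have hcg : cg = cf + n * e := by omega
      have hWg : Wg = Wf + 3 * e := by
        have e2 : n * (Wf + 3 * e) = n * Wf + 3 * (n * e) := by ring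
        have : n * Wg = n * (Wf + 3*e) := by omega
        exact Nat.eq_of_mul_eq_mul_left (by omega) this
      rw [hcg, hWg]
      have expand : rho S ^ ((Wf+cf) + (n+3)*e) * sg S ^ (cf + n*e)
          = (rho S ^ (Wf+cf) * sg S ^ cf) * ((rho S ^ (n+3) * sg S ^ n)) ^ e := by
        rw [pow_add (rho S) (Wf+cf) ((n+3)*e), pow_add (sg S) cf (n*e),
          pow_mul, pow_mul, mul_pow]
        ring
      rw [show Wf + 3*e + (cf + n*e) = (Wf + cf) + (n+3)*e by ring, expand, hε,
        one_pow, mul_one]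
    rcases le_total (cc f l) (cc g l) with hle | hle
    · exact hne (by rw [hSf, hSg, key (cc f l) Wf (cc g l) Wg hEf hEg hle])
    · exact hne (by rw [hSf, hSg, key (cc g l) Wg (cc f l) Wf hEg hEf hle])
  · exact hε

/-- existence of the canonical chord count `s0 < n` for given residue data -/
lemma exists_s0 (hn : 7 ≤ n) (hcop : Nat.Coprime n 3) (d t : ℕ)
    (hd : d < n) (hdt : d ≤ t) : ∃ s0 W : ℕ, s0 < n ∧ t + 3*s0 = d + n*W := by
  obtain ⟨m, -, hm⟩ := Nat.exists_mul_mod_eq_one_of_coprime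
    (Nat.coprime_comm.mp hcop) (by omega)
  set c := d + (n-1)*t with hc
  set s0 := (m * c) % n with hs0
  have hs0lt : s0 < n := Nat.mod_lt _ (by omega)
  have h1 : 3 * m ≡ 1 [MOD n] := by
    unfold Nat.ModEq
    rw [hm, Nat.mod_eq_of_lt (by omega : 1 < n)]
  have h2 : s0 ≡ m * c [MOD n] := Nat.mod_modEq _ _
  have h3 : 3 * s0 ≡ (3 * m) * c [MOD n] := by
    have := h2.mul_left 3
    rwa [show 3 * (m * c) = (3*m)*c by ring] at this
  have h5 : (3*m)*c ≡ c [MOD n] := by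
    have := h1.mul_right c
    rwa [one_mul] at this
  have h6 : t + 3 * s0 ≡ t + c [MOD n] := (h3.trans h5).add_left t
  have h7 : t + c = d + n*t := by
    have h9 : (n-1+1) * t = n*t := by rw [Nat.sub_add_cancel (by omega : 1 ≤ n)]
    have h10 : (n-1)*t + t = n*t := by rw [← h9]; ring
    omega
  have h8 : (d + n*t) % n = d % n := by
    rw [show n*t = t*n by ring, Nat.add_mul_mod_self_right]
  have hmod : (t + 3*s0) % n = d := by
    have := h6
    unfold Nat.ModEq at this
    rw [this, h7, h8, Nat.mod_eq_of_lt hd]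
  have hdm := Nat.div_add_mod (t + 3*s0) n
  refine ⟨s0, (t+3*s0)/n, hs0lt, ?_⟩
  conv_lhs => rw [← hdm]
  rw [hmod]
  exact Nat.add_comm _ _

end Eps

end Stmt10

namespace Stmt10

section MainLemmas

variable {n : ℕ} [NeZero n] {S : SignedDigraph (Fin n)}

lemma sssd_of_wks (hn : 7 ≤ n)
    (h1 : ∀ a : Fin n, S.Adj a (pr a))
    (hc0 : S.Adj v0 (dsc v0 4))
    (h4 : ∀ a b : Fin n, S.Adj a b → b = pr a ∨ a.val + n = b.val + 4)
    (h5 : ∀ a b : Fin n, S.Adj a b → a.val + n = b.val + 4 →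
      S.sgn a b = sg S * rho S * EdS S a 4)
    (heps : rho S ^ (n+3) * sg S ^ n = -1)
    (u v : Fin n) (t s0 W : ℕ)
    (hEq : t + 3*s0 = dist u v + n*W)
    (w1 : Wk S u v t s0) (w2 : Wk S u v t (s0+n)) :
    S.HasSSSD t u v := by
  obtain ⟨f, hf0, hft, hfw, hfc⟩ := w1
  obtain ⟨g, hg0, hgt, hgw, hgc⟩ := w2
  obtain ⟨Wf, hEf, hSf⟩ := master hn h1 h4 h5 f t hfw
  obtain ⟨Wg, hEg, hSg⟩ := master hn h1 h4 h5 g t hgw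
  rw [hf0, hft, hfc] at hEf hSf
  rw [hg0, hgt, hgc] at hEg hSg
  have hWf : Wf = W := by
    have : n * Wf = n * W := by omega
    exact Nat.eq_of_mul_eq_mul_left (by omega) this
  have hWg : Wg = W + 3 := by
    have e1 : n*(W+3) = n*W + 3*n := by ring
    have : n * Wg = n * (W+3) := by omega
    exact Nat.eq_of_mul_eq_mul_left (by omega) this
  rw [hWf] at hSf
  rw [hWg] at hSg
  refine ⟨f, g, ⟨hf0, hft, hfw⟩, ⟨hg0, hgt, hgw⟩, ?_⟩
  have hkey : EdS S u (dist u v) * rho S ^ (W + 3 + (s0 + n)) * sg S ^ (s0 + n)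
      = (EdS S u (dist u v) * rho S ^ (W + s0) * sg S ^ s0)
        * (rho S ^ (n+3) * sg S ^ n) := by
    rw [show W + 3 + (s0 + n) = (W + s0) + (n+3) by ring,
      pow_add (rho S) (W+s0) (n+3), pow_add (sg S) s0 n]
    ring
  rw [hSf, hSg, hkey, heps, mul_neg_one]
  have hXu : EdS S u (dist u v) * rho S ^ (W + s0) * sg S ^ s0 = 1 ∨
      EdS S u (dist u v) * rho S ^ (W + s0) * sg S ^ s0 = -1 :=
    unit_mul (unit_mul (EdS_unit h1 u _) (unit_pow (rho_unit h1) _))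
      (unit_pow (sg_unit h1 hc0) _)
  rcases hXu with h | h <;> rw [h] <;> norm_num

lemma upper (hn : 7 ≤ n) (hcop : Nat.Coprime n 3)
    (h1 : ∀ a : Fin n, S.Adj a (pr a))
    (hc0 : S.Adj v0 (dsc v0 4))
    (hc3 : S.Adj (⟨3, by omega⟩ : Fin n) (dsc (⟨3, by omega⟩ : Fin n) 4))
    (h4 : ∀ a b : Fin n, S.Adj a b → b = pr a ∨ a.val + n = b.val + 4)
    (h5 : ∀ a b : Fin n, S.Adj a b → a.val + n = b.val + 4 →
      S.sgn a b = sg S * rho S * EdS S a 4)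
    (heps : rho S ^ (n+3) * sg S ^ n = -1)
    (u v : Fin n) (t : ℕ)
    (ht : u.val + (2*n^2 - 8*n + 4) ≤ t) : S.HasSSSD t u v := by
  have hu := u.isLt; have hv := v.isLt
  have hnn : n^2 = n*n := pow_two n
  have h7n : 7*n ≤ n*n := Nat.mul_le_mul_right n (by omega)
  have hd : dist u v < n := dist_lt u v
  have hdt : dist u v ≤ t := by omega
  obtain ⟨s0, W, hs0, hEq⟩ := exists_s0 hn hcop (dist u v) t hd hdt
  -- common product expansion facts
  obtain ⟨m, hm⟩ : ∃ m, n - 1 = s0 + m := ⟨n - 1 - s0, by omega⟩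
  have em : n*(n-1) = n*s0 + n*m := by rw [hm]; ring
  have e4 : n*(n-1) + n*1 = n*n := by
    rw [← Nat.mul_add, show n-1+1 = n by omega]
  have e5 : 3*m ≤ n*m := Nat.mul_le_mul_right m (by omega)
  by_cases hvu : v.val ≤ u.val
  · have hdd : dist u v = u.val - v.val := by unfold dist; rw [if_pos hvu]
    have hWge : s0 + (n - 3) ≤ W := by
      by_contra hcon
      push_neg at hcon
      have hmul : n*W ≤ n*(s0 + (n-4)) := Nat.mul_le_mul_left n (by omega)
      have e2 : n*(s0 + (n-4)) = n*s0 + n*(n-4) := by ring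
      have e3 : n*(n-4) + n*4 = n*n := by
        rw [← Nat.mul_add, show n-4+4 = n by omega]
      omega
    have hW1 : s0 + 1 ≤ W := by omega
    have w1 := conA hn h1 hc0 u v s0 W t hEq hW1
    have hEq2 : t + 3*(s0+n) = dist u v + n*(W+3) := by
      have : n*(W+3) = n*W + 3*n := by ring
      omega
    have w2 := conC hn h1 hc0 hc3 u v (s0+n) (W+3) t hEq2 (by omega)
      (by rw [if_pos hvu]; omega)
    exact sssd_of_wks hn h1 hc0 h4 h5 heps u v t s0 W hEq w1 w2
  · have hdd : dist u v = u.val + n - v.val := by unfold dist; rw [if_neg hvu]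
    have hvpos : 1 ≤ v.val := by omega
    have hWge : s0 + (n - 4) ≤ W := by
      by_contra hcon
      push_neg at hcon
      have hmul : n*W ≤ n*(s0 + (n-5)) := Nat.mul_le_mul_left n (by omega)
      have e2 : n*(s0 + (n-5)) = n*s0 + n*(n-5) := by ring
      have e3 : n*(n-5) + n*5 = n*n := by
        rw [← Nat.mul_add, show n-5+5 = n by omega]
      omega
    have hW1 : s0 + 1 ≤ W := by omega
    have w1 := conA hn h1 hc0 u v s0 W t hEq hW1
    have hEq2 : t + 3*(s0+n) = dist u v + n*(W+3) := by
      have : n*(W+3) = n*W + 3*n := by ring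
      omega
    have w2 := conC hn h1 hc0 hc3 u v (s0+n) (W+3) t hEq2 (by omega)
      (by rw [if_neg hvu]; omega)
    exact sssd_of_wks hn h1 hc0 h4 h5 heps u v t s0 W hEq w1 w2

lemma lower (hn : 7 ≤ n) (hcop : Nat.Coprime n 3)
    (h1 : ∀ a : Fin n, S.Adj a (pr a))
    (h4 : ∀ a b : Fin n, S.Adj a b → b = pr a ∨ a.val + n = b.val + 4)
    (h5 : ∀ a b : Fin n, S.Adj a b → a.val + n = b.val + 4 →
      S.sgn a b = sg S * rho S * EdS S a 4)
    (u : Fin n) :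
    ¬ S.HasSSSD (u.val + (2*n^2 - 8*n + 4) - 1) u v0 := by
  intro hss
  obtain ⟨f, g, ⟨hf0, hft, hfw⟩, ⟨hg0, hgt, hgw⟩, hne⟩ := hss
  have hnn : n^2 = n*n := pow_two n
  have h7n : 7*n ≤ n*n := Nat.mul_le_mul_right n (by omega)
  have hu := u.isLt
  set t := u.val + (2*n^2 - 8*n + 4) - 1 with htdef
  have ht : t = u.val + (2*(n*n) - 8*n + 3) := by omega
  have forced : ∀ (h : ℕ → Fin n), h 0 = u → h t = v0 → IsWalk S.Adj t h →
      ∃ W', cc h t = n - 1 ∧ n * W' = 2*(n*n) - 5*n ∧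
      S.walkSign t h = EdS S u u.val * rho S ^ (W' + (n-1)) * sg S ^ (n-1) := by
    intro h h0 hT hw
    obtain ⟨W', hEqh, hSh⟩ := master hn h1 h4 h5 h t hw
    have hle := cc_le hn h4 h t hw W' hEqh
    rw [h0, hT] at hEqh hSh hle
    have hv00 : (v0 : Fin n).val = 0 := rfl
    have hχ : (if u.val < (v0 : Fin n).val then 1 else 0) = 0 := by
      rw [hv00]; simp
    rw [hχ] at hle
    have hdu : dist u v0 = u.val := by
      unfold dist; rw [hv00, if_pos (by omega)]; omega
    rw [hdu] at hEqh hSh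
    set c := cc h t with hcdef
    have hWbig : 2*n ≤ W' + 8 := by
      by_contra hcon
      push_neg at hcon
      have hmul : n*(W'+9) ≤ n*(2*n) := Nat.mul_le_mul_left n (by omega)
      have e1 : n*(W'+9) = n*W' + 9*n := by ring
      have e2 : n*(2*n) = 2*(n*n) := by ring
      omega
    have hdvd : n ∣ 3*(c+1) := by
      refine ⟨W' + 8 - 2*n, ?_⟩
      have e1 : n*(W'+8-2*n) + n*(2*n) = n*(W'+8) := by
        rw [← Nat.mul_add, Nat.sub_add_cancel (by omega)]
      have e2 : n*(W'+8) = n*W' + 8*n := by ring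
      have e3 : n*(2*n) = 2*(n*n) := by ring
      omega
    obtain ⟨e, he⟩ := Nat.Coprime.dvd_of_dvd_mul_left hcop hdvd
    have he1 : 1 ≤ e := by
      rcases Nat.eq_zero_or_pos e with h0' | h0'
      · rw [h0', Nat.mul_zero] at he; omega
      · omega
    have he2 : e = 1 := by
      by_contra hcon
      have he2' : 2 ≤ e := by omega
      have hc2n : 2*n - 1 ≤ c := by
        have hmul := Nat.mul_le_mul_left n he2'
        have e3 : n*2 = 2*n := by ring
        omega
      have hnc : n*c ≤ n*W' := Nat.mul_le_mul_left n hle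
      have g1 : (n-3)*(2*n-1) ≤ (n-3)*c := Nat.mul_le_mul_left (n-3) hc2n
      have g2 : (n-3)*c + 3*c = n*c := by
        rw [← Nat.add_mul, Nat.sub_add_cancel (by omega)]
      have g3 : (n-3)*(2*n-1) + 3*(2*n-1) = n*(2*n-1) := by
        rw [← Nat.add_mul, Nat.sub_add_cancel (by omega)]
      have g4 : n*(2*n-1) + n*1 = n*(2*n) := by
        rw [← Nat.mul_add, show 2*n-1+1 = 2*n by omega]
      have g5 : n*(2*n) = 2*(n*n) := by ring
      omega
    have hcn : c = n - 1 := by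
      rw [he2, Nat.mul_one] at he
      omega
    refine ⟨W', hcn, by omega, ?_⟩
    rw [hSh, hcn]
  obtain ⟨Wf, hcf, hEf, hSf⟩ := forced f hf0 hft hfw
  obtain ⟨Wg, hcg, hEg, hSg⟩ := forced g hg0 hgt hgw
  have hW : Wf = Wg := Nat.eq_of_mul_eq_mul_left (show 0 < n by omega) (by omega)
  exact hne (by rw [hSf, hSg, hW])

lemma localBase_eq (hn : 7 ≤ n) (hcop : Nat.Coprime n 3)
    (h1 : ∀ a : Fin n, S.Adj a (pr a))
    (hc0 : S.Adj v0 (dsc v0 4))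
    (hc3 : S.Adj (⟨3, by omega⟩ : Fin n) (dsc (⟨3, by omega⟩ : Fin n) 4))
    (h4 : ∀ a b : Fin n, S.Adj a b → b = pr a ∨ a.val + n = b.val + 4)
    (h5 : ∀ a b : Fin n, S.Adj a b → a.val + n = b.val + 4 →
      S.sgn a b = sg S * rho S * EdS S a 4)
    (heps : rho S ^ (n+3) * sg S ^ n = -1)
    (u : Fin n) :
    S.localBase u = u.val + (2*n^2 - 8*n + 4) := by
  have hnn : n^2 = n*n := pow_two n
  have h7n : 7*n ≤ n*n := Nat.mul_le_mul_right n (by omega)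
  unfold SignedDigraph.localBase
  have hmem : (u.val + (2*n^2 - 8*n + 4)) ∈
      {l : ℕ | ∀ t ≥ l, ∀ v : Fin n, S.HasSSSD t u v} :=
    fun t htl v => upper hn hcop h1 hc0 hc3 h4 h5 heps u v t htl
  apply le_antisymm
  · exact Nat.sInf_le hmem
  · by_contra hcon
    push_neg at hcon
    have hmem2 := Nat.sInf_mem (⟨_, hmem⟩ :
      Set.Nonempty {l : ℕ | ∀ t ≥ l, ∀ v : Fin n, S.HasSSSD t u v})
    have hss := hmem2 (u.val + (2*n^2 - 8*n + 4) - 1) (by omega) v0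
    exact lower hn hcop h1 h4 h5 u hss

end MainLemmas

end Stmt10

namespace Stmt10

lemma kth_eval (n C k : ℕ) (hk1 : 1 ≤ k) (hk2 : k ≤ n) :
    kthSmallest (fun i : Fin n => C + i.val) k = C + (k-1) := by
  unfold kthSmallest
  have hl : (Finset.univ.val.map (fun i : Fin n => C + i.val))
      = ((List.range n).map (fun i => C + i) : List ℕ) := by
    rw [Fin.univ_def]
    show Multiset.map _ (↑(List.finRange n) : Multiset (Fin n)) = _
    rw [Multiset.map_coe, Multiset.coe_eq_coe]
    refine List.Perm.of_eq ?_
    apply List.ext_getElem <;> simp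
  rw [hl]
  have hsorted : ((List.range n).map (fun i => C + i)).Pairwise (· ≤ ·) :=
    List.Pairwise.map _ (fun a b hab => by omega) List.pairwise_lt_range
  haveI : IsAntisymm ℕ (· ≤ ·) := ⟨fun _ _ => Nat.le_antisymm⟩
  have hs : Multiset.sort ((List.range n).map (fun i => C + i) : List ℕ) (· ≤ ·)
      = (List.range n).map (fun i => C + i) := by
    exact List.Perm.eq_of_pairwise' (Multiset.pairwise_sort _ _) hsorted
      (Multiset.coe_eq_coe.mp (Multiset.sort_eq _ _))
  rw [hs]
  have hlen : k - 1 < ((List.range n).map (fun i => C + i)).length := by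
    simp; omega
  rw [List.getD_eq_getElem?_getD, List.getElem?_eq_getElem hlen]
  simp

end Stmt10

/-- Let `n ≥ 6` with `gcd(n, n-3) = 1`. For `j = 2, 3, 4`, let
`𝒬ⱼ` be a primitive nonpowerful signed digraph with underlying digraph `𝓑ⱼ` in
which all cycles of length `n-3` have the same sign. Then
`l(k) = l(v_k) = 2n²-8n+3+k` for every `1 ≤ k ≤ n` (and every such `j`). -/
theorem stmt10 (n : ℕ) (hn : 6 ≤ n) (hgcd : Nat.gcd n (n - 3) = 1)
    (S : SignedDigraph (Fin n))
    (hadj : S.Adj = B2Adj n ∨ S.Adj = B3Adj n ∨ S.Adj = B4Adj n)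
    (hpn : S.IsPrimitiveNonpowerful)
    (hsgn : S.SameSignCycles (n - 3)) :
    ∀ k : ℕ, ∀ _hk1 : 1 ≤ k, ∀ _hk2 : k ≤ n,
      kthSmallest S.localBase k = S.localBase ⟨k - 1, by omega⟩ ∧
      S.localBase ⟨k - 1, by omega⟩ = 2 * n ^ 2 - 8 * n + 3 + k := by
  intro k hk1 hk2
  have hn7 : 7 ≤ n := by
    by_contra h
    have h6 : n = 6 := by omega
    rw [h6] at hgcd
    exact absurd hgcd (by decide)
  haveI : NeZero n := ⟨by omega⟩
  have hcop := Stmt10.cop3 hn7 hgcd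
  have h1 := Stmt10.arcs_cyc hn7 hadj
  have hc0 := Stmt10.arcs_chord0 hn7 hadj
  have hc3 := Stmt10.arcs_chord3 hn7 hadj
  have h4 := Stmt10.arcs_classify hn7 hadj
  have h5 : ∀ a b : Fin n, S.Adj a b → a.val + n = b.val + 4 →
      S.sgn a b = Stmt10.sg S * Stmt10.rho S * Stmt10.EdS S a 4 :=
    fun a b hab hv => Stmt10.chord_sign' hn7 h1 hc0 hsgn a b hab hv
  have heps := Stmt10.eps_neg hn7 hcop h1 hc0 h4 h5 hpn
  have hnn : n^2 = n*n := pow_two n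
  have h8n : 8*n ≤ 2*(n*n) := by
    have := Nat.mul_le_mul_right n (show 8 ≤ 2*n by omega)
    have e : (2*n)*n = 2*(n*n) := by ring
    omega
  have key : ∀ u : Fin n, S.localBase u = 2*n^2 - 8*n + 4 + u.val := by
    intro u
    rw [Stmt10.localBase_eq hn7 hcop h1 hc0 hc3 h4 h5 heps u]
    omega
  have hfun : S.localBase = fun i : Fin n => (2*n^2 - 8*n + 4) + i.val :=
    funext key
  constructor
  · rw [hfun, Stmt10.kth_eval n (2*n^2 - 8*n + 4) k hk1 hk2]
  · rw [key]
    show 2*n^2 - 8*n + 4 + (k-1) = 2 * n ^ 2 - 8 * n + 3 + k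
    omega
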